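/- Let μ be a linear functional on one-variable polynomials with monic orthogonal polynomials p_0,...,p_{n−1} satisfying h_k := μ(p_k²) ≠ 0. Define φ from antisymmetric polynomials in m variables of degree < n in each to antisymmetric polynomials in n−m variables by (φf)(x) = (1/m!) μ^{⊗m}_y( f(y) Δ(y,x) ), where Δ(y,x) is the Vandermonde product of the concatenated tuple. Then for S ⊆ [n] with |S| = m, φ(p_S) = (-1)^{m(m+1)/2 + Σ_{s∈S} s} · (Π_{i∈S} h_{i−1}) · p_{S^c}, where p_S(x) = det_{1≤i≤m, j∈S}(p_{j−1}(x_i)) and S^c = [n] \ S. -/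

import Mathlib

open Finset

/-- `μ^{⊗m}_y`: the linear functional `μ` applied in each of the first `m` variables
(the `y`-variables) of a polynomial in `m + r` variables, leaving a polynomial in the
remaining `r` variables (the `x`-variables). -/
noncomputable def tensorPowPartial (μ : Polynomial ℝ →ₗ[ℝ] ℝ) (m r : ℕ)
    (f : MvPolynomial (Fin m ⊕ Fin r) ℝ) : MvPolynomial (Fin r) ℝ :=
  ∑ d ∈ f.support,
    (f.coeff d * ∏ i : Fin m, μ (Polynomial.X ^ d (Sum.inl i))) •
      ∏ j : Fin r, (MvPolynomial.X j : MvPolynomial (Fin r) ℝ) ^ d (Sum.inr j)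

namespace TPPAux

variable (μ : Polynomial ℝ →ₗ[ℝ] ℝ) (m r : ℕ)

lemma tpp_eq_sum_subset (f : MvPolynomial (Fin m ⊕ Fin r) ℝ)
    (T : Finset ((Fin m ⊕ Fin r) →₀ ℕ)) (hT : f.support ⊆ T) :
    tensorPowPartial μ m r f =
      ∑ d ∈ T,
        (f.coeff d * ∏ i : Fin m, μ (Polynomial.X ^ d (Sum.inl i))) •
          ∏ j : Fin r, (MvPolynomial.X j : MvPolynomial (Fin r) ℝ) ^ d (Sum.inr j) := by
  rw [tensorPowPartial]
  refine Finset.sum_subset hT ?_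
  intro d _ hd
  rw [MvPolynomial.notMem_support_iff.mp hd, zero_mul, zero_smul]

lemma tpp_add (f g : MvPolynomial (Fin m ⊕ Fin r) ℝ) :
    tensorPowPartial μ m r (f + g) = tensorPowPartial μ m r f + tensorPowPartial μ m r g := by
  rw [tpp_eq_sum_subset μ m r (f + g) (f.support ∪ g.support)
      (MvPolynomial.support_add),
    tpp_eq_sum_subset μ m r f (f.support ∪ g.support) Finset.subset_union_left,
    tpp_eq_sum_subset μ m r g (f.support ∪ g.support) Finset.subset_union_right,
    ← Finset.sum_add_distrib]
  refine Finset.sum_congr rfl fun d _ => ?_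
  rw [MvPolynomial.coeff_add, add_mul, add_smul]

lemma tpp_zero : tensorPowPartial μ m r 0 = 0 := by
  rw [tensorPowPartial]
  simp

lemma tpp_smul (c : ℝ) (f : MvPolynomial (Fin m ⊕ Fin r) ℝ) :
    tensorPowPartial μ m r (c • f) = c • tensorPowPartial μ m r f := by
  rw [tpp_eq_sum_subset μ m r (c • f) f.support (MvPolynomial.support_smul),
    tensorPowPartial, Finset.smul_sum]
  refine Finset.sum_congr rfl fun d _ => ?_
  rw [MvPolynomial.coeff_smul, smul_eq_mul, mul_assoc, mul_smul]


lemma tpp_sum {ι : Type*} (s : Finset ι) (f : ι → MvPolynomial (Fin m ⊕ Fin r) ℝ) :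
    tensorPowPartial μ m r (∑ i ∈ s, f i) = ∑ i ∈ s, tensorPowPartial μ m r (f i) := by
  classical
  induction s using Finset.cons_induction with
  | empty => simp [tpp_zero]
  | cons a s ha ih =>
    rw [Finset.sum_cons, tpp_add, ih, Finset.sum_cons]

lemma tpp_monomial (d : (Fin m ⊕ Fin r) →₀ ℕ) (c : ℝ) :
    tensorPowPartial μ m r (MvPolynomial.monomial d c) =
      (c * ∏ i : Fin m, μ (Polynomial.X ^ d (Sum.inl i))) •
        ∏ j : Fin r, (MvPolynomial.X j : MvPolynomial (Fin r) ℝ) ^ d (Sum.inr j) := by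
  rw [tpp_eq_sum_subset μ m r _ {d} MvPolynomial.support_monomial_subset,
    Finset.sum_singleton, MvPolynomial.coeff_monomial, if_pos rfl]


lemma my_prod_smul {ι M : Type*} [CommMonoid M] [MulAction ℝ M] [IsScalarTower ℝ M M]
    [SMulCommClass ℝ M M] (s : Finset ι) (b : ι → ℝ) (f : ι → M) :
    ∏ i ∈ s, b i • f i = (∏ i ∈ s, b i) • ∏ i ∈ s, f i := by
  induction s using Finset.cons_induction with
  | empty => simp
  | cons a s ha ih => rw [prod_cons, ih, prod_cons, prod_cons, smul_mul_smul_comm]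

lemma prod_monomial {σ ι : Type*} (s : Finset ι) (d : ι → (σ →₀ ℕ)) (c : ι → ℝ) :
    ∏ x ∈ s, (MvPolynomial.monomial (d x) (c x) : MvPolynomial σ ℝ) =
      MvPolynomial.monomial (∑ x ∈ s, d x) (∏ x ∈ s, c x) := by
  induction s using Finset.cons_induction with
  | empty => simp
  | cons a s ha ih =>
    rw [prod_cons, ih, sum_cons, prod_cons, MvPolynomial.monomial_mul]

lemma sum_single_apply {ι : Type*} [Fintype ι] [DecidableEq ι] (κ : ι → ℕ) (y : ι) :
    (∑ x : ι, Finsupp.single x (κ x)) y = κ y := by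
  rw [← Finsupp.applyAddHom_apply, map_sum]
  simp [Finsupp.single_apply]

lemma aeval_X_eq_sum {σ : Type*} (u : σ) (q : Polynomial ℝ) :
    Polynomial.aeval (MvPolynomial.X u : MvPolynomial σ ℝ) q =
      ∑ k ∈ q.support, MvPolynomial.monomial (Finsupp.single u k) (q.coeff k) := by
  conv_lhs => rw [q.as_sum_support]
  rw [map_sum]
  refine Finset.sum_congr rfl fun k _ => ?_
  rw [Polynomial.aeval_monomial, MvPolynomial.X_pow_eq_monomial]
  rw [MvPolynomial.algebraMap_eq, MvPolynomial.C_mul_monomial, mul_one]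

lemma aeval_X_eq_sum' {σ : Type*} (u : σ) (q : Polynomial ℝ) :
    Polynomial.aeval (MvPolynomial.X u : MvPolynomial σ ℝ) q =
      ∑ k ∈ q.support, q.coeff k • (MvPolynomial.X u : MvPolynomial σ ℝ) ^ k := by
  rw [aeval_X_eq_sum]
  refine Finset.sum_congr rfl fun k _ => ?_
  rw [MvPolynomial.X_pow_eq_monomial, MvPolynomial.smul_monomial, smul_eq_mul, mul_one]

lemma mu_eq_sum (μ : Polynomial ℝ →ₗ[ℝ] ℝ) (q : Polynomial ℝ) :
    μ q = ∑ k ∈ q.support, q.coeff k * μ (Polynomial.X ^ k) := by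
  conv_lhs => rw [q.as_sum_support]
  rw [map_sum]
  refine Finset.sum_congr rfl fun k _ => ?_
  rw [← Polynomial.smul_X_eq_monomial, map_smul, smul_eq_mul]


lemma tpp_aeval_prod (μ : Polynomial ℝ →ₗ[ℝ] ℝ) (m r : ℕ)
    (q : Fin m → Polynomial ℝ) (g : Fin r → Polynomial ℝ) :
    tensorPowPartial μ m r
      ((∏ i : Fin m, Polynomial.aeval (MvPolynomial.X (Sum.inl i) :
          MvPolynomial (Fin m ⊕ Fin r) ℝ) (q i)) *
        ∏ j : Fin r, Polynomial.aeval (MvPolynomial.X (Sum.inr j) :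
          MvPolynomial (Fin m ⊕ Fin r) ℝ) (g j)) =
      (∏ i : Fin m, μ (q i)) •
        ∏ j : Fin r, Polynomial.aeval (MvPolynomial.X j : MvPolynomial (Fin r) ℝ) (g j) := by
  classical
  set h : Fin m ⊕ Fin r → Polynomial ℝ := Sum.elim q g with hh
  set cf : (x : Fin m ⊕ Fin r) → ℕ → ℝ :=
    Sum.elim (fun i k => (q i).coeff k * μ (Polynomial.X ^ k)) (fun j k => (g j).coeff k)
    with hcf
  set vv : (x : Fin m ⊕ Fin r) → ℕ → MvPolynomial (Fin r) ℝ :=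
    Sum.elim (fun _ _ => (1 : MvPolynomial (Fin r) ℝ))
      (fun j k => (MvPolynomial.X j : MvPolynomial (Fin r) ℝ) ^ k) with hvv
  have step1 : (∏ i : Fin m, Polynomial.aeval (MvPolynomial.X (Sum.inl i) :
          MvPolynomial (Fin m ⊕ Fin r) ℝ) (q i)) *
        ∏ j : Fin r, Polynomial.aeval (MvPolynomial.X (Sum.inr j) :
          MvPolynomial (Fin m ⊕ Fin r) ℝ) (g j) =
      ∏ x : Fin m ⊕ Fin r, Polynomial.aeval (MvPolynomial.X x :
          MvPolynomial (Fin m ⊕ Fin r) ℝ) (h x) := by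
    rw [Fintype.prod_sum_type]
    rfl
  rw [step1]
  have step2 : ∏ x : Fin m ⊕ Fin r, Polynomial.aeval (MvPolynomial.X x :
          MvPolynomial (Fin m ⊕ Fin r) ℝ) (h x)
      = ∑ κ ∈ Fintype.piFinset (fun x => (h x).support),
          MvPolynomial.monomial (∑ x : Fin m ⊕ Fin r, Finsupp.single x (κ x))
            (∏ x : Fin m ⊕ Fin r, (h x).coeff (κ x)) := by
    simp_rw [aeval_X_eq_sum]
    rw [Finset.prod_univ_sum]
    exact Finset.sum_congr rfl fun κ _ => prod_monomial _ _ _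
  rw [step2, tpp_sum]
  have termeq : ∀ κ : (Fin m ⊕ Fin r) → ℕ,
      tensorPowPartial μ m r (MvPolynomial.monomial
          (∑ x : Fin m ⊕ Fin r, Finsupp.single x (κ x))
          (∏ x : Fin m ⊕ Fin r, (h x).coeff (κ x)))
        = ∏ x : Fin m ⊕ Fin r, cf x (κ x) • vv x (κ x) := by
    intro κ
    rw [tpp_monomial]
    simp_rw [sum_single_apply]
    rw [my_prod_smul]
    congr 1
    · rw [Fintype.prod_sum_type (fun x => cf x (κ x)),
        Fintype.prod_sum_type (fun x => (h x).coeff (κ x))]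
      simp only [hcf, hh, Sum.elim_inl, Sum.elim_inr, Finset.prod_mul_distrib]
      ring
    · rw [Fintype.prod_sum_type (fun x => vv x (κ x))]
      simp [hvv]
  have step3 : ∏ x : Fin m ⊕ Fin r, ∑ k ∈ (h x).support, cf x k • vv x k
      = ∑ κ ∈ Fintype.piFinset (fun x => (h x).support),
          ∏ x : Fin m ⊕ Fin r, cf x (κ x) • vv x (κ x) :=
    Finset.prod_univ_sum _ _
  rw [Finset.sum_congr rfl (fun κ _ => termeq κ), ← step3]
  rw [Fintype.prod_sum_type]
  have left : ∀ i : Fin m, (∑ k ∈ (h (Sum.inl i)).support, cf (Sum.inl i) k • vv (Sum.inl i) k)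
      = μ (q i) • (1 : MvPolynomial (Fin r) ℝ) := by
    intro i
    simp only [hh, hcf, hvv, Sum.elim_inl]
    rw [← Finset.sum_smul, ← mu_eq_sum]
  have right : ∀ j : Fin r, (∑ k ∈ (h (Sum.inr j)).support, cf (Sum.inr j) k • vv (Sum.inr j) k)
      = Polynomial.aeval (MvPolynomial.X j : MvPolynomial (Fin r) ℝ) (g j) := by
    intro j
    simp only [hh, hcf, hvv, Sum.elim_inr]
    rw [aeval_X_eq_sum']
  simp_rw [left, right]
  rw [my_prod_smul]
  simp [smul_mul_assoc]


/-- real-valued sign of a permutation -/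
noncomputable def sgnR {α : Type*} [DecidableEq α] [Fintype α] (σ : Equiv.Perm α) : ℝ :=
  ((Equiv.Perm.sign σ : ℤ) : ℝ)

lemma sgnR_mul_self {α : Type*} [DecidableEq α] [Fintype α] (σ : Equiv.Perm α) :
    sgnR σ * sgnR σ = 1 := by
  rw [sgnR, ← Int.cast_mul, ← Units.val_mul, Int.units_mul_self, Units.val_one, Int.cast_one]

lemma sgnR_inv {α : Type*} [DecidableEq α] [Fintype α] (σ : Equiv.Perm α) :
    sgnR σ⁻¹ = sgnR σ := by
  rw [sgnR, sgnR, Equiv.Perm.sign_inv]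

lemma det_expand {ι B : Type*} [DecidableEq ι] [Fintype ι] [CommRing B] [Algebra ℝ B]
    (M : Matrix ι ι B) :
    M.det = ∑ σ : Equiv.Perm ι, sgnR σ • ∏ i, M (σ i) i := by
  rw [Matrix.det_apply]
  refine Finset.sum_congr rfl fun σ _ => ?_
  rw [Units.smul_def, sgnR, Int.cast_smul_eq_zsmul]

/-- extraction of a sum-congr decomposition -/
lemma exists_sumCongr {α β : Type*} (u : Equiv.Perm (α ⊕ β)) (f : Equiv.Perm α)
    (hu : ∀ a, u (Sum.inl a) = Sum.inl (f a)) :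
    ∃ π : Equiv.Perm β, u = Equiv.sumCongr f π := by
  classical
  have hr : ∀ b, ∃ c, u (Sum.inr b) = Sum.inr c := by
    intro b
    rcases hx : u (Sum.inr b) with a | c
    · exfalso
      have h1 : u (Sum.inl (f.symm a)) = Sum.inl a := by rw [hu, Equiv.apply_symm_apply]
      have := u.injective (h1.trans hx.symm)
      exact Sum.inl_ne_inr this
    · exact ⟨c, rfl⟩
  have hr' : ∀ b, ∃ c, u.symm (Sum.inr b) = Sum.inr c := by
    intro b
    rcases hx : u.symm (Sum.inr b) with a | c
    · exfalso
      have h1 : u (Sum.inl a) = Sum.inr b := by rw [← hx, Equiv.apply_symm_apply]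
      rw [hu] at h1
      exact Sum.inl_ne_inr h1
    · exact ⟨c, rfl⟩
  choose π0 hπ0 using hr
  choose π1 hπ1 using hr'
  have hli : Function.LeftInverse π1 π0 := by
    intro b
    have : u.symm (Sum.inr (π0 b)) = Sum.inr b := by rw [← hπ0, Equiv.symm_apply_apply]
    rw [hπ1] at this
    exact Sum.inr_injective this
  have hri : Function.RightInverse π1 π0 := by
    intro b
    have : u (Sum.inr (π1 b)) = Sum.inr b := by rw [← hπ1, Equiv.apply_symm_apply]
    rw [hπ0] at this
    exact Sum.inr_injective this
  refine ⟨⟨π0, π1, hli, hri⟩, ?_⟩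
  ext x
  cases x with
  | inl a => simp [hu]
  | inr b => simp [hπ0]

/-- degree labelling -/
def degS (m r : ℕ) (y : Fin m ⊕ Fin r) : ℕ := (finSumFinEquiv y : ℕ)

lemma degS_injective (m r : ℕ) : Function.Injective (degS m r) :=
  Fin.val_injective.comp finSumFinEquiv.injective

theorem core (μ : Polynomial ℝ →ₗ[ℝ] ℝ) (p : ℕ → Polynomial ℝ)
    (horth : ∀ j k, j ≠ k → μ (p j * p k) = 0) (m r : ℕ)
    (w : Equiv.Perm (Fin m ⊕ Fin r)) :
    tensorPowPartial μ m r
      ((Matrix.of fun i k : Fin m => Polynomial.aeval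
          (MvPolynomial.X (Sum.inl i) : MvPolynomial (Fin m ⊕ Fin r) ℝ)
          (p (degS m r (w (Sum.inl k))))).det *
       (Matrix.of fun x y : Fin m ⊕ Fin r => Polynomial.aeval
          (MvPolynomial.X x : MvPolynomial (Fin m ⊕ Fin r) ℝ) (p (degS m r y))).det)
    = ((m.factorial : ℝ) * sgnR w *
        ∏ i : Fin m, μ (p (degS m r (w (Sum.inl i))) * p (degS m r (w (Sum.inl i))))) •
      (Matrix.of fun j k : Fin r => Polynomial.aeval
          (MvPolynomial.X j : MvPolynomial (Fin r) ℝ) (p (degS m r (w (Sum.inr k))))).det := by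
  classical
  set a : Fin m → ℕ := fun i => degS m r (w (Sum.inl i)) with ha
  set b : Fin r → ℕ := fun j => degS m r (w (Sum.inr j)) with hb
  set H : ℝ := ∏ i : Fin m, μ (p (a i) * p (a i)) with hH
  set Gp : Equiv.Perm (Fin r) → MvPolynomial (Fin r) ℝ :=
    fun π => ∏ j : Fin r, Polynomial.aeval (MvPolynomial.X j : MvPolynomial (Fin r) ℝ)
      (p (b (π j))) with hGp
  -- expand both determinants
  rw [det_expand, det_expand, Finset.sum_mul_sum]
  simp_rw [smul_mul_smul_comm]
  rw [tpp_sum]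
  simp_rw [tpp_sum, tpp_smul]
  -- massage each term
  have hterm : ∀ (σ : Equiv.Perm (Fin m)) (τ : Equiv.Perm (Fin m ⊕ Fin r)),
      tensorPowPartial μ m r
        ((∏ i, (Matrix.of fun i k : Fin m => Polynomial.aeval
            (MvPolynomial.X (Sum.inl i) : MvPolynomial (Fin m ⊕ Fin r) ℝ)
            (p (a k))) (σ i) i) *
         ∏ x, (Matrix.of fun x y : Fin m ⊕ Fin r => Polynomial.aeval
            (MvPolynomial.X x : MvPolynomial (Fin m ⊕ Fin r) ℝ) (p (degS m r y))) (τ x) x)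
      = (∏ i : Fin m, μ (p (a (σ⁻¹ i)) * p (degS m r (τ⁻¹ (Sum.inl i))))) •
          ∏ j : Fin r, Polynomial.aeval (MvPolynomial.X j : MvPolynomial (Fin r) ℝ)
            (p (degS m r (τ⁻¹ (Sum.inr j)))) := by
    intro σ τ
    have h1 : (∏ i, (Matrix.of fun i k : Fin m => Polynomial.aeval
            (MvPolynomial.X (Sum.inl i) : MvPolynomial (Fin m ⊕ Fin r) ℝ)
            (p (a k))) (σ i) i)
        = ∏ i : Fin m, Polynomial.aeval
            (MvPolynomial.X (Sum.inl i) : MvPolynomial (Fin m ⊕ Fin r) ℝ) (p (a (σ⁻¹ i))) := by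
      rw [← Equiv.prod_comp σ (fun i => Polynomial.aeval
            (MvPolynomial.X (Sum.inl i) : MvPolynomial (Fin m ⊕ Fin r) ℝ) (p (a (σ⁻¹ i))))]
      refine Finset.prod_congr rfl fun i _ => ?_
      rw [Matrix.of_apply, Equiv.Perm.inv_def σ, Equiv.symm_apply_apply]
    have h2 : (∏ x, (Matrix.of fun x y : Fin m ⊕ Fin r => Polynomial.aeval
            (MvPolynomial.X x : MvPolynomial (Fin m ⊕ Fin r) ℝ) (p (degS m r y))) (τ x) x)
        = ∏ x : Fin m ⊕ Fin r, Polynomial.aeval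
            (MvPolynomial.X x : MvPolynomial (Fin m ⊕ Fin r) ℝ) (p (degS m r (τ⁻¹ x))) := by
      rw [← Equiv.prod_comp τ (fun x => Polynomial.aeval
            (MvPolynomial.X x : MvPolynomial (Fin m ⊕ Fin r) ℝ) (p (degS m r (τ⁻¹ x))))]
      refine Finset.prod_congr rfl fun x _ => ?_
      rw [Matrix.of_apply, Equiv.Perm.inv_def τ, Equiv.symm_apply_apply]
    rw [h1, h2, Fintype.prod_sum_type, ← mul_assoc, ← Finset.prod_mul_distrib]
    simp_rw [← map_mul]
    rw [tpp_aeval_prod]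
  rw [Finset.sum_congr rfl fun σ _ => Finset.sum_congr rfl fun τ _ => by rw [hterm σ τ]]
  -- reparametrize the inner sum
  have hreindex : ∀ σ : Equiv.Perm (Fin m),
      (∑ τ : Equiv.Perm (Fin m ⊕ Fin r), (sgnR σ * sgnR τ) •
        ((∏ i : Fin m, μ (p (a (σ⁻¹ i)) * p (degS m r (τ⁻¹ (Sum.inl i))))) •
          ∏ j : Fin r, Polynomial.aeval (MvPolynomial.X j : MvPolynomial (Fin r) ℝ)
            (p (degS m r (τ⁻¹ (Sum.inr j))))))
      = ∑ u : Equiv.Perm (Fin m ⊕ Fin r), (sgnR σ * (sgnR w * sgnR u)) •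
        ((∏ i : Fin m, μ (p (a (σ⁻¹ i)) * p (degS m r (w (u (Sum.inl i)))))) •
          ∏ j : Fin r, Polynomial.aeval (MvPolynomial.X j : MvPolynomial (Fin r) ℝ)
            (p (degS m r (w (u (Sum.inr j)))))) := by
    intro σ
    refine (Fintype.sum_bijective (fun u : Equiv.Perm (Fin m ⊕ Fin r) => (u.trans w).symm)
      ?_ _ _ ?_).symm
    · constructor
      · intro u v huv
        have h2 : u.trans w = v.trans w := by
          have := congrArg Equiv.symm huv
          simpa using this
        ext x
        have h3 := congrArg (fun e : Equiv (Fin m ⊕ Fin r) (Fin m ⊕ Fin r) => e x) h2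
        simp only [Equiv.trans_apply] at h3
        exact w.injective h3
      · intro τ
        refine ⟨τ.symm.trans w.symm, ?_⟩
        ext x
        simp
    · intro u
      have hsign : sgnR ((u.trans w).symm) = sgnR w * sgnR u := by
        have h1 : (u.trans w).symm = (w * u)⁻¹ := rfl
        rw [h1, sgnR_inv, sgnR, Equiv.Perm.sign_mul, Units.val_mul, Int.cast_mul]
        rfl
      have hinv : ∀ x, ((u.trans w).symm)⁻¹ x = w (u x) := fun x => rfl
      simp_rw [hsign, hinv]
  rw [Finset.sum_congr rfl fun σ _ => hreindex σ]
  -- kill non-matching terms, for each σ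
  have hinner : ∀ σ : Equiv.Perm (Fin m),
      (∑ u : Equiv.Perm (Fin m ⊕ Fin r), (sgnR σ * (sgnR w * sgnR u)) •
        ((∏ i : Fin m, μ (p (a (σ⁻¹ i)) * p (degS m r (w (u (Sum.inl i)))))) •
          ∏ j : Fin r, Polynomial.aeval (MvPolynomial.X j : MvPolynomial (Fin r) ℝ)
            (p (degS m r (w (u (Sum.inr j)))))))
      = ∑ π : Equiv.Perm (Fin r), (sgnR w * sgnR π) • (H • Gp π) := by
    intro σ
    set F : Equiv.Perm (Fin m ⊕ Fin r) → MvPolynomial (Fin r) ℝ := fun u =>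
      (sgnR σ * (sgnR w * sgnR u)) •
        ((∏ i : Fin m, μ (p (a (σ⁻¹ i)) * p (degS m r (w (u (Sum.inl i)))))) •
          ∏ j : Fin r, Polynomial.aeval (MvPolynomial.X j : MvPolynomial (Fin r) ℝ)
            (p (degS m r (w (u (Sum.inr j)))))) with hF
    have hvanish : ∀ u ∈ (Finset.univ : Finset (Equiv.Perm (Fin m ⊕ Fin r))),
        u ∉ (Finset.univ : Finset (Equiv.Perm (Fin r))).image
          (fun π : Equiv.Perm (Fin r) => Equiv.sumCongr σ⁻¹ π) → F u = 0 := by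
      intro u _ hu
      have hne : ∃ i, u (Sum.inl i) ≠ Sum.inl (σ⁻¹ i) := by
        by_contra hcon
        push_neg at hcon
        obtain ⟨π, hπ⟩ := exists_sumCongr u σ⁻¹ hcon
        exact hu (Finset.mem_image.mpr ⟨π, Finset.mem_univ _, hπ.symm⟩)
      obtain ⟨i, hi⟩ := hne
      have hzero : μ (p (a (σ⁻¹ i)) * p (degS m r (w (u (Sum.inl i))))) = 0 := by
        refine horth _ _ ?_
        intro hcontra
        have h2 : w (Sum.inl (σ⁻¹ i)) = w (u (Sum.inl i)) := degS_injective m r hcontra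
        exact hi (w.injective h2).symm
      rw [hF]
      simp only
      rw [Finset.prod_eq_zero (Finset.mem_univ i) hzero, zero_smul, smul_zero]
    have hinj : ∀ π1 ∈ (Finset.univ : Finset (Equiv.Perm (Fin r))),
        ∀ π2 ∈ (Finset.univ : Finset (Equiv.Perm (Fin r))),
        Equiv.sumCongr σ⁻¹ π1 = Equiv.sumCongr σ⁻¹ π2 → π1 = π2 := by
      intro π1 _ π2 _ hππ
      ext j
      have h3 := congrArg (fun e : Equiv ((Fin m) ⊕ (Fin r)) ((Fin m) ⊕ (Fin r)) =>
        e (Sum.inr j)) hππ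
      have h4 : π1 j = π2 j := by simpa using h3
      exact congrArg Fin.val h4
    have himg : ∑ u ∈ (Finset.univ : Finset (Equiv.Perm (Fin r))).image
        (fun π : Equiv.Perm (Fin r) => Equiv.sumCongr σ⁻¹ π), F u
        = ∑ u : Equiv.Perm (Fin m ⊕ Fin r), F u :=
      Finset.sum_subset (Finset.subset_univ _) hvanish
    rw [← himg, Finset.sum_image hinj]
    refine Finset.sum_congr rfl fun π _ => ?_
    rw [hF]
    simp only
    have h0 : ∀ i, (Equiv.sumCongr σ⁻¹ π) (Sum.inl i) = Sum.inl (σ⁻¹ i) := fun i => rfl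
    have h1 : ∀ j, (Equiv.sumCongr σ⁻¹ π) (Sum.inr j) = Sum.inr (π j) := fun j => rfl
    simp_rw [h0, h1]
    have hsgn : sgnR (Equiv.sumCongr σ⁻¹ π) = sgnR σ * sgnR π := by
      rw [sgnR, Equiv.Perm.sign_sumCongr, Units.val_mul, Int.cast_mul, ← sgnR_inv σ]
      rfl
    have hprod : (∏ i : Fin m, μ (p (a (σ⁻¹ i)) * p (degS m r (w (Sum.inl (σ⁻¹ i)))))) = H := by
      rw [hH, ← Equiv.prod_comp σ⁻¹ (fun i => μ (p (a i) * p (a i)))]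
    rw [hprod, hsgn]
    simp only [smul_smul]
    congr 1
    have hs := sgnR_mul_self σ
    linear_combination (sgnR w * sgnR π * H) * hs
  rw [Finset.sum_congr rfl fun σ _ => hinner σ]
  -- now no σ-dependence
  rw [Finset.sum_const, Finset.card_univ, Fintype.card_perm, Fintype.card_fin]
  -- convert det on the RHS
  have hdet : (Matrix.of fun j k : Fin r => Polynomial.aeval
      (MvPolynomial.X j : MvPolynomial (Fin r) ℝ) (p (b k))).det
      = ∑ π : Equiv.Perm (Fin r), sgnR π • Gp π := by
    rw [det_expand]
    rw [← Equiv.sum_comp (Equiv.inv (Equiv.Perm (Fin r)))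
      (fun π => sgnR π • Gp π)]
    refine Finset.sum_congr rfl fun π _ => ?_
    have : (Equiv.inv (Equiv.Perm (Fin r))) π = π⁻¹ := rfl
    rw [this, sgnR_inv]
    congr 1
    simp only [hGp]
    rw [← Equiv.prod_comp π (fun j => Polynomial.aeval
      (MvPolynomial.X j : MvPolynomial (Fin r) ℝ) (p (b (π⁻¹ j))))]
    refine Finset.prod_congr rfl fun j _ => ?_
    rw [Matrix.of_apply, Equiv.Perm.inv_def π, Equiv.symm_apply_apply]
  rw [hdet, Finset.smul_sum, Finset.smul_sum]
  refine Finset.sum_congr rfl fun π _ => ?_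
  rw [show (m.factorial • ((sgnR w * sgnR π) • H • Gp π) : MvPolynomial (Fin r) ℝ)
      = (m.factorial : ℝ) • ((sgnR w * sgnR π) • H • Gp π) from
    (Nat.cast_smul_eq_nsmul ℝ _ _).symm]
  simp only [smul_smul]
  congr 1
  ring


lemma card_filter_val_lt (n m : ℕ) (h : m ≤ n) :
    ((univ : Finset (Fin n)).filter (fun i : Fin n => (i : ℕ) < m)).card = m := by
  have h2 : (Finset.range n).filter (fun i => i < m) = Finset.range m := by
    ext i
    simp only [Finset.mem_filter, Finset.mem_range]
    omega
  rw [Finset.card_filter, Fin.sum_univ_eq_sum_range (fun i => if i < m then 1 else 0) n,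
    ← Finset.sum_filter, h2]
  simp

lemma filter_sum_succ (n mm : ℕ) (f : Fin (n+1) → ℕ) :
    ∑ i ∈ (univ : Finset (Fin (n+1))).filter (fun i : Fin (n+1) => (i:ℕ) < mm+1), f i
      = f 0 + ∑ i ∈ (univ : Finset (Fin n)).filter (fun i : Fin n => (i:ℕ) < mm), f i.succ := by
  rw [Finset.sum_filter, Finset.sum_filter, Fin.sum_univ_succ]
  congr 1
  · simp

lemma filter_sum_castSucc (n mm : ℕ) (h : mm ≤ n) (f : Fin (n+1) → ℕ) :
    ∑ i ∈ (univ : Finset (Fin (n+1))).filter (fun i : Fin (n+1) => (i:ℕ) < mm), f i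
      = ∑ i ∈ (univ : Finset (Fin n)).filter (fun i : Fin n => (i:ℕ) < mm), f i.castSucc := by
  rw [Finset.sum_filter, Finset.sum_filter, Fin.sum_univ_castSucc]
  have hlast : (((Fin.last n) : Fin (n+1)) : ℕ) = n := rfl
  rw [hlast, if_neg (by omega), add_zero]
  refine Finset.sum_congr rfl fun i _ => ?_
  have h3 : ((i.castSucc : Fin (n+1)) : ℕ) = (i : ℕ) := rfl
  rw [h3]

lemma descend0 {n : ℕ} (π : Equiv.Perm (Fin (n+1))) (h0 : π 0 = 0) :
    ∃ e : Equiv.Perm (Fin n), Equiv.Perm.sign π = Equiv.Perm.sign e ∧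
      ∀ i : Fin n, π i.succ = (e i).succ := by
  set pe := Equiv.Perm.decomposeFin π with hpe
  have hπ : π = Equiv.Perm.decomposeFin.symm (pe.1, pe.2) := by
    rw [hpe]
    simp
  have hp0 : pe.1 = 0 := by
    have := Equiv.Perm.decomposeFin_symm_apply_zero pe.1 pe.2
    rw [← hπ, h0] at this
    exact this.symm
  refine ⟨pe.2, ?_, ?_⟩
  · conv_lhs => rw [hπ]
    rw [hp0, Equiv.Perm.decomposeFin.symm_sign, if_pos rfl, one_mul]
  · intro i
    conv_lhs => rw [hπ]
    rw [hp0, Equiv.Perm.decomposeFin_symm_apply_succ]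
    simp

theorem sign_blocks (n : ℕ) : ∀ (m : ℕ) (π : Equiv.Perm (Fin n)),
    (∀ i j : Fin n, (i:ℕ) < m → (j:ℕ) < m → i < j → π i < π j) →
    (∀ i j : Fin n, m ≤ (i:ℕ) → m ≤ (j:ℕ) → i < j → π i < π j) →
    m ≤ n →
    Equiv.Perm.sign π = (-1) ^ (m*(m-1)/2 +
      ∑ i ∈ (univ : Finset (Fin n)).filter (fun i : Fin n => (i:ℕ) < m), (π i : ℕ)) := by
  induction n with
  | zero =>
    intro m π h1 h2 hm
    interval_cases m
    have hπ1 : π = 1 := Subsingleton.elim _ _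
    subst hπ1
    simp
  | succ n ih =>
    intro m π h1 h2 hm
    by_cases ha : ((π⁻¹ 0 : Fin (n+1)) : ℕ) < m
    · -- π 0 = 0 case
      have hmpos : 0 < m := Nat.pos_of_ne_zero (by omega)
      have ha0 : π⁻¹ 0 = 0 := by
        by_contra hne
        have hpos : 0 < π⁻¹ 0 := Fin.pos_iff_ne_zero.mpr hne
        have := h1 0 (π⁻¹ 0) (by simpa using hmpos) ha hpos
        rw [Equiv.Perm.inv_def π, Equiv.apply_symm_apply] at this
        exact Fin.not_lt_zero _ this
      have h00 : π 0 = 0 := by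
        conv_lhs => rw [← ha0]
        exact π.apply_symm_apply 0
      obtain ⟨m', rfl⟩ : ∃ m', m = m' + 1 := ⟨m - 1, by omega⟩
      have hm' : m' ≤ n := by omega
      obtain ⟨e, hsign, hrel⟩ := descend0 π h00
      have he1 : ∀ i j : Fin n, (i:ℕ) < m' → (j:ℕ) < m' → i < j → e i < e j := by
        intro i j hi hj hij
        have := h1 i.succ j.succ (by simpa [Fin.val_succ] using Nat.add_lt_add_right hi 1)
          (by simpa [Fin.val_succ] using Nat.add_lt_add_right hj 1)
          (by simpa [Fin.succ_lt_succ_iff] using hij)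
        rw [hrel i, hrel j, Fin.succ_lt_succ_iff] at this
        exact this
      have he2 : ∀ i j : Fin n, m' ≤ (i:ℕ) → m' ≤ (j:ℕ) → i < j → e i < e j := by
        intro i j hi hj hij
        have := h2 i.succ j.succ (by simp [Fin.val_succ]; omega)
          (by simp [Fin.val_succ]; omega)
          (by simpa [Fin.succ_lt_succ_iff] using hij)
        rw [hrel i, hrel j, Fin.succ_lt_succ_iff] at this
        exact this
      have hsum : ∑ i ∈ (univ : Finset (Fin (n+1))).filter (fun i : Fin (n+1) => (i:ℕ) < m'+1), (π i : ℕ)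
          = (∑ i ∈ (univ : Finset (Fin n)).filter (fun i : Fin n => (i:ℕ) < m'), (e i : ℕ)) + m' := by
        rw [filter_sum_succ n m' (fun i => (π i : ℕ))]
        have : ∀ i ∈ (univ : Finset (Fin n)).filter (fun i : Fin n => (i:ℕ) < m'),
            ((π i.succ : Fin (n+1)) : ℕ) = (e i : ℕ) + 1 := by
          intro i _
          rw [hrel i]
          rfl
        rw [Finset.sum_congr rfl this, Finset.sum_add_distrib, Finset.sum_const,
          card_filter_val_lt n m' hm', h00]
        simp [mul_comm]
      rw [hsign, ih m' e he1 he2 hm', hsum]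
      have htri : (m'+1)*((m'+1)-1)/2 = m'*(m'-1)/2 + m' := by
        rw [show (m'+1)*((m'+1)-1)/2 = (m'+1).choose 2 from (Nat.choose_two_right _).symm,
          show m'*(m'-1)/2 = m'.choose 2 from (Nat.choose_two_right _).symm,
          Nat.choose_succ_succ, Nat.choose_one_right, add_comm]
      rw [htri]
      have hexp : (m'*(m'-1)/2 + m') + ((∑ i ∈ (univ : Finset (Fin n)).filter
          (fun i : Fin n => (i:ℕ) < m'), (e i : ℕ)) + m')
          = (m'*(m'-1)/2 + ∑ i ∈ (univ : Finset (Fin n)).filter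
            (fun i : Fin n => (i:ℕ) < m'), (e i : ℕ)) + 2*m' := by
        ring
      rw [hexp]
      simp [pow_add, pow_mul]
    · -- the 0 is at position m
      push_neg at ha
      have hmlt : (π⁻¹ 0 : Fin (n+1)).val ≤ n := Nat.lt_succ_iff.mp (π⁻¹ 0).isLt
      have ham : ((π⁻¹ 0 : Fin (n+1)) : ℕ) = m := by
        by_contra hne
        have hlt : m < ((π⁻¹ 0 : Fin (n+1)) : ℕ) := by omega
        have := h2 ⟨m, by omega⟩ (π⁻¹ 0) (le_refl m) ha hlt
        rw [Equiv.Perm.inv_def π, Equiv.apply_symm_apply] at this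
        exact Fin.not_lt_zero _ this
      have hmn : m ≤ n := by omega
      set c : Equiv.Perm (Fin (n+1)) := Fin.cycleRange (⟨m, by omega⟩ : Fin (n+1)) with hc
      set ρ : Equiv.Perm (Fin (n+1)) := π * c⁻¹ with hρ
      have hπc : ∀ x, π x = ρ (c x) := by
        intro x
        rw [hρ, Equiv.Perm.mul_apply, Equiv.Perm.inv_def c, Equiv.symm_apply_apply]
      have hρ0 : ρ 0 = 0 := by
        have hc0 : c⁻¹ 0 = ⟨m, by omega⟩ := by
          rw [Equiv.Perm.inv_eq_iff_eq]
          exact (Fin.cycleRange_self _).symm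
        rw [hρ, Equiv.Perm.mul_apply, hc0]
        have : (⟨m, by omega⟩ : Fin (n+1)) = π⁻¹ 0 := by
          apply Fin.ext
          exact ham.symm
        rw [this, Equiv.Perm.inv_def π, Equiv.apply_symm_apply]
      obtain ⟨e, hsign, hrel⟩ := descend0 ρ hρ0
      have hcs : ∀ i : Fin n, (i:ℕ) < m → c i.castSucc = i.succ := by
        intro i hi
        have hlt : (i.castSucc : Fin (n+1)) < (⟨m, by omega⟩ : Fin (n+1)) := by
          simp only [Fin.lt_iff_val_lt_val]
          exact hi
        apply Fin.ext
        rw [hc, Fin.coe_cycleRange_of_lt hlt]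
        rfl
      have hπe1 : ∀ i : Fin n, (i:ℕ) < m → π i.castSucc = (e i).succ := by
        intro i hi
        rw [hπc, hcs i hi, hrel i]
      have hπe2 : ∀ i : Fin n, m ≤ (i:ℕ) → π i.succ = (e i).succ := by
        intro i hi
        have hgt : (⟨m, by omega⟩ : Fin (n+1)) < i.succ := by
          simp only [Fin.lt_iff_val_lt_val, Fin.val_succ]
          omega
        have hfix : c i.succ = i.succ := Fin.cycleRange_of_gt hgt
        rw [hπc, hfix, hrel i]
      have he1 : ∀ i j : Fin n, (i:ℕ) < m → (j:ℕ) < m → i < j → e i < e j := by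
        intro i j hi hj hij
        have := h1 i.castSucc j.castSucc hi hj (by simpa [Fin.castSucc_lt_castSucc_iff] using hij)
        rw [hπe1 i hi, hπe1 j hj, Fin.succ_lt_succ_iff] at this
        exact this
      have he2 : ∀ i j : Fin n, m ≤ (i:ℕ) → m ≤ (j:ℕ) → i < j → e i < e j := by
        intro i j hi hj hij
        have := h2 i.succ j.succ (by simp [Fin.val_succ]; omega) (by simp [Fin.val_succ]; omega)
          (by simpa [Fin.succ_lt_succ_iff] using hij)
        rw [hπe2 i hi, hπe2 j hj, Fin.succ_lt_succ_iff] at this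
        exact this
      have hsum : ∑ i ∈ (univ : Finset (Fin (n+1))).filter (fun i : Fin (n+1) => (i:ℕ) < m), (π i : ℕ)
          = (∑ i ∈ (univ : Finset (Fin n)).filter (fun i : Fin n => (i:ℕ) < m), (e i : ℕ)) + m := by
        rw [filter_sum_castSucc n m hmn (fun i => (π i : ℕ))]
        have h4 : ∀ i ∈ (univ : Finset (Fin n)).filter (fun i : Fin n => (i:ℕ) < m),
            ((π i.castSucc : Fin (n+1)) : ℕ) = (e i : ℕ) + 1 := by
          intro i hi
          rw [hπe1 i (Finset.mem_filter.mp hi).2]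
          rfl
        rw [Finset.sum_congr rfl h4, Finset.sum_add_distrib, Finset.sum_const,
          card_filter_val_lt n m hmn]
        simp [mul_comm]
      have hπdec : π = ρ * c := (inv_mul_cancel_right π c).symm
      have hsignc : Equiv.Perm.sign c = (-1) ^ m := by
        rw [hc, Fin.sign_cycleRange]
      rw [hsum]
      conv_lhs => rw [hπdec]
      rw [map_mul, hsign, ih m e he1 he2 hmn, hsignc, ← pow_add, ← add_assoc]


-- pairs product = double product
lemma prod_pairs_eq {B : Type*} [CommMonoid B] (n' : ℕ) (f : Fin n' → Fin n' → B) :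
    ∏ q ∈ (univ : Finset (Fin n' × Fin n')).filter (fun q => q.1 < q.2), f q.1 q.2
      = ∏ i : Fin n', ∏ j ∈ Finset.Ioi i, f i j := by
  rw [← Finset.prod_sigma (univ : Finset (Fin n')) (fun i => Finset.Ioi i)
    (fun x => f x.1 x.2)]
  refine Finset.prod_bij' (fun q _ => (⟨q.1, q.2⟩ : Σ _ : Fin n', Fin n'))
    (fun x _ => (x.1, x.2)) ?_ ?_ ?_ ?_ ?_
  · intro q hq
    rw [Finset.mem_sigma]
    exact ⟨Finset.mem_univ _, Finset.mem_Ioi.mpr (Finset.mem_filter.mp hq).2⟩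
  · intro x hx
    rw [Finset.mem_sigma] at hx
    exact Finset.mem_filter.mpr ⟨Finset.mem_univ _, Finset.mem_Ioi.mp hx.2⟩
  · intro q _; rfl
  · intro x _; rfl
  · intro q _; rfl

lemma prod_comp_orderEmbOfFin {M : Type*} [CommMonoid M] {n m : ℕ} (S : Finset (Fin n))
    (hS : S.card = m) (f : Fin n → M) :
    ∏ k : Fin m, f (S.orderEmbOfFin hS k) = ∏ s ∈ S, f s := by
  refine Finset.prod_bij (fun k _ => S.orderEmbOfFin hS k) ?_ ?_ ?_ ?_
  · intro k _
    exact Finset.orderEmbOfFin_mem S hS k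
  · intro k1 _ k2 _ h
    exact (S.orderEmbOfFin hS).injective h
  · intro s hs
    have : s ∈ Set.range (S.orderEmbOfFin hS) := by
      rw [Finset.range_orderEmbOfFin]
      exact hs
    obtain ⟨k, hk⟩ := this
    exact ⟨k, Finset.mem_univ _, hk⟩
  · intro k _; rfl

lemma sum_comp_orderEmbOfFin {n m : ℕ} (S : Finset (Fin n))
    (hS : S.card = m) (f : Fin n → ℕ) :
    ∑ k : Fin m, f (S.orderEmbOfFin hS k) = ∑ s ∈ S, f s := by
  refine Finset.sum_bij (fun k _ => S.orderEmbOfFin hS k) ?_ ?_ ?_ ?_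
  · intro k _
    exact Finset.orderEmbOfFin_mem S hS k
  · intro k1 _ k2 _ h
    exact (S.orderEmbOfFin hS).injective h
  · intro s hs
    have : s ∈ Set.range (S.orderEmbOfFin hS) := by
      rw [Finset.range_orderEmbOfFin]
      exact hs
    obtain ⟨k, hk⟩ := this
    exact ⟨k, Finset.mem_univ _, hk⟩
  · intro k _; rfl

lemma filter_sum_eq {n m : ℕ} (hmn : m ≤ n) (f : Fin n → ℕ) (g : Fin m → ℕ)
    (hfg : ∀ (x : Fin n) (h : (x:ℕ) < m), f x = g ⟨x, h⟩) :
    ∑ x ∈ (univ : Finset (Fin n)).filter (fun x : Fin n => (x:ℕ) < m), f x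
      = ∑ k : Fin m, g k := by
  refine Finset.sum_bij' (fun (x : Fin n) hx => (⟨(x:ℕ), (Finset.mem_filter.mp hx).2⟩ : Fin m))
    (fun (k : Fin m) _ => (⟨(k:ℕ), lt_of_lt_of_le k.isLt hmn⟩ : Fin n)) ?_ ?_ ?_ ?_ ?_
  · intro x hx
    exact Finset.mem_univ _
  · intro k _
    exact Finset.mem_filter.mpr ⟨Finset.mem_univ _, k.isLt⟩
  · intro x hx
    apply Fin.ext
    rfl
  · intro k _
    apply Fin.ext
    rfl
  · intro x hx
    exact hfg x (Finset.mem_filter.mp hx).2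

lemma tri_succ (k : ℕ) : (k+1)*((k+1)-1)/2 = k*(k-1)/2 + k := by
  rw [show (k+1)*((k+1)-1)/2 = (k+1).choose 2 from (Nat.choose_two_right _).symm,
    show k*(k-1)/2 = k.choose 2 from (Nat.choose_two_right _).symm,
    Nat.choose_succ_succ, Nat.choose_one_right, add_comm]


end TPPAux

open TPPAux

theorem hodge_star_on_antisymmetric_basis (μ : Polynomial ℝ →ₗ[ℝ] ℝ)
    (p : ℕ → Polynomial ℝ)
    (hdeg : ∀ k, (p k).natDegree = k) (hmonic : ∀ k, (p k).Monic)
    (horth : ∀ j k, j ≠ k → μ (p j * p k) = 0)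
    (hnz : ∀ k, μ (p k * p k) ≠ 0)
    (n m : ℕ) (S : Finset (Fin n)) (hS : S.card = m) :
    ((1 : ℝ) / (m.factorial : ℝ)) • tensorPowPartial μ m (n - m)
        ((Matrix.det (Matrix.of fun i k : Fin m =>
            Polynomial.aeval
              (MvPolynomial.X (Sum.inl i) : MvPolynomial (Fin m ⊕ Fin (n - m)) ℝ)
              (p ((S.orderEmbOfFin hS k : Fin n) : ℕ)))) *
          ∏ q ∈ Finset.univ.filter
              (fun q : Fin (m + (n - m)) × Fin (m + (n - m)) => q.1 < q.2),
            ((MvPolynomial.X (finSumFinEquiv.symm q.2) :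
                MvPolynomial (Fin m ⊕ Fin (n - m)) ℝ) -
              MvPolynomial.X (finSumFinEquiv.symm q.1))) =
      ((-1 : ℝ) ^ (m * (m + 1) / 2 + ∑ s ∈ S, ((s : ℕ) + 1)) *
          ∏ i ∈ S, μ (p (i : ℕ) * p (i : ℕ))) •
        Matrix.det (Matrix.of fun i k : Fin (n - m) =>
          Polynomial.aeval
            (MvPolynomial.X i : MvPolynomial (Fin (n - m)) ℝ)
            (p (((Sᶜ).orderEmbOfFin
                (by rw [Finset.card_compl, hS, Fintype.card_fin]) k : Fin n) : ℕ))) := by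
  classical
  have hmn : m ≤ n := by
    rw [← hS]
    exact le_trans (Finset.card_le_univ S) (by simp)
  set r : ℕ := n - m with hrdef
  have hmr : m + r = n := Nat.add_sub_cancel' hmn
  have hcompl : (Sᶜ).card = r := by rw [Finset.card_compl, hS, Fintype.card_fin]
  -- the identification of Fin m ⊕ Fin r with Fin n respecting positions
  set d : (Fin m ⊕ Fin r) ≃ Fin n := finSumFinEquiv.trans (finCongr hmr) with hd
  -- the identification via S and its complement
  set E : Fin m ⊕ Fin r → Fin n := Sum.elim (fun k => S.orderEmbOfFin hS k)
    (fun k => (Sᶜ).orderEmbOfFin hcompl k) with hE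
  have hEinj : Function.Injective E := by
    rintro (x | x) (y | y) hxy
    · exact congrArg Sum.inl ((S.orderEmbOfFin hS).injective hxy)
    · exfalso
      have h1 : E (Sum.inl x) ∈ S := Finset.orderEmbOfFin_mem S hS x
      have h2 : E (Sum.inr y) ∈ Sᶜ := Finset.orderEmbOfFin_mem _ hcompl y
      rw [hxy] at h1
      exact (Finset.mem_compl.mp h2) h1
    · exfalso
      have h1 : E (Sum.inr x) ∈ Sᶜ := Finset.orderEmbOfFin_mem _ hcompl x
      have h2 : E (Sum.inl y) ∈ S := Finset.orderEmbOfFin_mem S hS y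
      rw [hxy] at h1
      exact (Finset.mem_compl.mp h1) h2
    · exact congrArg Sum.inr (((Sᶜ).orderEmbOfFin hcompl).injective hxy)
  have hEbij : Function.Bijective E := by
    rw [Fintype.bijective_iff_injective_and_card]
    exact ⟨hEinj, by simp [hmr]⟩
  set eE : (Fin m ⊕ Fin r) ≃ Fin n := Equiv.ofBijective E hEbij with heE
  have heEapp : ∀ x, eE x = E x := fun x => rfl
  set w : Equiv.Perm (Fin m ⊕ Fin r) := eE.trans d.symm with hw
  -- value computations
  have hdval : ∀ y : Fin n, degS m r (d.symm y) = (y : ℕ) := by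
    intro y
    rw [degS, hd]
    simp
  have hwl : ∀ k : Fin m, degS m r (w (Sum.inl k)) = ((S.orderEmbOfFin hS k : Fin n) : ℕ) := by
    intro k
    rw [hw, Equiv.trans_apply, hdval, heEapp]
    rfl
  have hwr : ∀ k : Fin r,
      degS m r (w (Sum.inr k)) = (((Sᶜ).orderEmbOfFin hcompl k : Fin n) : ℕ) := by
    intro k
    rw [hw, Equiv.trans_apply, hdval, heEapp]
    rfl
  -- Vandermonde product to determinant
  set Z : Fin (m + r) → MvPolynomial (Fin m ⊕ Fin r) ℝ :=
    fun i => MvPolynomial.X (finSumFinEquiv.symm i) with hZ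
  have hmonic' : ∀ j : Fin (m + r),
      ((p (j : ℕ)).map (algebraMap ℝ (MvPolynomial (Fin m ⊕ Fin r) ℝ))).Monic :=
    fun j => (hmonic _).map _
  have hdeg' : ∀ j : Fin (m + r),
      ((p (j : ℕ)).map (algebraMap ℝ (MvPolynomial (Fin m ⊕ Fin r) ℝ))).natDegree = (j : ℕ) :=
    fun j => ((hmonic _).natDegree_map _).trans (hdeg _)
  have hvdm : (∏ q ∈ Finset.univ.filter
        (fun q : Fin (m + r) × Fin (m + r) => q.1 < q.2),
      ((MvPolynomial.X (finSumFinEquiv.symm q.2) : MvPolynomial (Fin m ⊕ Fin r) ℝ) -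
        MvPolynomial.X (finSumFinEquiv.symm q.1)))
      = (Matrix.of fun x y : Fin m ⊕ Fin r => Polynomial.aeval
          (MvPolynomial.X x : MvPolynomial (Fin m ⊕ Fin r) ℝ) (p (degS m r y))).det := by
    rw [show (∏ q ∈ Finset.univ.filter
        (fun q : Fin (m + r) × Fin (m + r) => q.1 < q.2),
      ((MvPolynomial.X (finSumFinEquiv.symm q.2) : MvPolynomial (Fin m ⊕ Fin r) ℝ) -
        MvPolynomial.X (finSumFinEquiv.symm q.1)))
      = ∏ q ∈ (univ : Finset (Fin (m+r) × Fin (m+r))).filter (fun q => q.1 < q.2),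
          (Z q.2 - Z q.1) from rfl]
    rw [prod_pairs_eq (m + r) (fun i j => Z j - Z i), ← Matrix.det_vandermonde Z,
      Matrix.det_eval_matrixOfPolynomials_eq_det_vandermonde Z
        (fun j => (p (j : ℕ)).map (algebraMap ℝ (MvPolynomial (Fin m ⊕ Fin r) ℝ)))
        hdeg' hmonic',
      ← Matrix.det_submatrix_equiv_self finSumFinEquiv]
    congr 1
    ext x y
    simp only [Matrix.submatrix_apply, Matrix.of_apply, hZ, Equiv.symm_apply_apply,
      Polynomial.eval_map]
    rw [Polynomial.aeval_def]
    rfl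
  have hdetF : (Matrix.of fun i k : Fin m => Polynomial.aeval
      (MvPolynomial.X (Sum.inl i) : MvPolynomial (Fin m ⊕ Fin r) ℝ)
      (p ((S.orderEmbOfFin hS k : Fin n) : ℕ)))
      = (Matrix.of fun i k : Fin m => Polynomial.aeval
      (MvPolynomial.X (Sum.inl i) : MvPolynomial (Fin m ⊕ Fin r) ℝ)
      (p (degS m r (w (Sum.inl k))))) := by
    ext i k
    rw [Matrix.of_apply, Matrix.of_apply, hwl]
  rw [hvdm, hdetF, core μ p horth m r w, smul_smul]
  -- the sign of w
  set πS : Equiv.Perm (Fin n) := (d.symm.trans w).trans d with hπS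
  have hsignw : Equiv.Perm.sign w = Equiv.Perm.sign πS :=
    (Equiv.Perm.sign_symm_trans_trans w d).symm
  have hπSval : ∀ x : Fin n, πS x = eE (d.symm x) := by
    intro x
    rw [hπS]
    simp only [Equiv.trans_apply, hw]
    rw [Equiv.apply_symm_apply]
  have hdsyml : ∀ (x : Fin n) (hx : (x:ℕ) < m),
      d.symm x = Sum.inl (⟨(x:ℕ), hx⟩ : Fin m) := by
    intro x hx
    rw [Equiv.symm_apply_eq]
    apply Fin.ext
    simp [hd]
  have hdsymr : ∀ (x : Fin n) (hx : m ≤ (x:ℕ)),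
      d.symm x = Sum.inr (⟨(x:ℕ) - m, by
        have := x.isLt
        omega⟩ : Fin r) := by
    intro x hx
    rw [Equiv.symm_apply_eq]
    apply Fin.ext
    have := x.isLt
    simp [hd]
    omega
  have hblock1 : ∀ i j : Fin n, (i:ℕ) < m → (j:ℕ) < m → i < j → πS i < πS j := by
    intro i j hi hj hij
    rw [hπSval, hπSval, hdsyml i hi, hdsyml j hj, heEapp, heEapp]
    show S.orderEmbOfFin hS ⟨(i:ℕ), hi⟩ < S.orderEmbOfFin hS ⟨(j:ℕ), hj⟩
    exact (S.orderEmbOfFin hS).strictMono hij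
  have hblock2 : ∀ i j : Fin n, m ≤ (i:ℕ) → m ≤ (j:ℕ) → i < j → πS i < πS j := by
    intro i j hi hj hij
    rw [hπSval, hπSval, hdsymr i hi, hdsymr j hj, heEapp, heEapp]
    show (Sᶜ).orderEmbOfFin hcompl _ < (Sᶜ).orderEmbOfFin hcompl _
    refine ((Sᶜ).orderEmbOfFin hcompl).strictMono ?_
    have hi2 := i.isLt
    have hj2 := j.isLt
    simp only [Fin.mk_lt_mk]
    omega
  have hsum1 : ∑ x ∈ (univ : Finset (Fin n)).filter (fun x : Fin n => (x:ℕ) < m),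
      ((πS x : Fin n) : ℕ) = ∑ s ∈ S, (s : ℕ) := by
    rw [filter_sum_eq hmn (fun x => ((πS x : Fin n) : ℕ))
      (fun k => ((S.orderEmbOfFin hS k : Fin n) : ℕ)) ?_,
      sum_comp_orderEmbOfFin S hS (fun s => (s : ℕ))]
    intro x hx
    show ((πS x : Fin n) : ℕ) = ((S.orderEmbOfFin hS ⟨(x:ℕ), hx⟩ : Fin n) : ℕ)
    rw [hπSval, hdsyml x hx, heEapp]
    rfl
  have hsignπ := sign_blocks n m πS hblock1 hblock2 hmn
  have hsgnw : sgnR w = (-1:ℝ) ^ (m*(m-1)/2 + ∑ s ∈ S, (s:ℕ)) := by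
    rw [sgnR, hsignw, hsignπ, hsum1]
    push_cast
    norm_num
  -- exponent bookkeeping
  have hexpS : m*(m+1)/2 + ∑ s ∈ S, ((s:ℕ)+1) = (m*(m-1)/2 + ∑ s ∈ S, (s:ℕ)) + 2*m := by
    have h1 : ∑ s ∈ S, ((s:ℕ)+1) = (∑ s ∈ S, (s:ℕ)) + m := by
      rw [Finset.sum_add_distrib, Finset.sum_const, hS]
      simp [mul_comm]
    have h2 : m*(m+1)/2 = m*(m-1)/2 + m := by
      rw [show m*(m+1)/2 = (m+1)*((m+1)-1)/2 by rw [Nat.add_sub_cancel, mul_comm]]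
      exact tri_succ m
    omega
  have hpow : ((-1:ℝ)) ^ (m * (m + 1) / 2 + ∑ s ∈ S, ((s : ℕ) + 1))
      = (-1:ℝ) ^ (m*(m-1)/2 + ∑ s ∈ S, (s:ℕ)) := by
    rw [hexpS, pow_add, pow_mul]
    norm_num
  have hH : (∏ i : Fin m, μ (p (degS m r (w (Sum.inl i))) * p (degS m r (w (Sum.inl i)))))
      = ∏ i ∈ S, μ (p (i : ℕ) * p (i : ℕ)) := by
    rw [show (∏ i : Fin m, μ (p (degS m r (w (Sum.inl i))) * p (degS m r (w (Sum.inl i)))))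
        = ∏ i : Fin m, μ (p ((S.orderEmbOfFin hS i : Fin n) : ℕ) *
            p ((S.orderEmbOfFin hS i : Fin n) : ℕ)) from
      Finset.prod_congr rfl fun i _ => by rw [hwl]]
    exact prod_comp_orderEmbOfFin S hS (fun s : Fin n => μ (p (s : ℕ) * p (s : ℕ)))
  have hfact : (m.factorial : ℝ) ≠ 0 := Nat.cast_ne_zero.mpr (Nat.factorial_ne_zero m)
  have hscal : (1 : ℝ) / (m.factorial : ℝ) * ((m.factorial : ℝ) * sgnR w *
      ∏ i : Fin m, μ (p (degS m r (w (Sum.inl i))) * p (degS m r (w (Sum.inl i)))))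
      = (-1 : ℝ) ^ (m * (m + 1) / 2 + ∑ s ∈ S, ((s : ℕ) + 1)) *
          ∏ i ∈ S, μ (p (i : ℕ) * p (i : ℕ)) := by
    rw [hH, hsgnw, hpow]
    field_simp
  rw [hscal]
  -- finally the right-hand determinants agree
  have hdetR : (Matrix.of fun j k : Fin r => Polynomial.aeval
      (MvPolynomial.X j : MvPolynomial (Fin r) ℝ) (p (degS m r (w (Sum.inr k)))))
      = (Matrix.of fun j k : Fin r => Polynomial.aeval
      (MvPolynomial.X j : MvPolynomial (Fin r) ℝ)
      (p (((Sᶜ).orderEmbOfFin hcompl k : Fin n) : ℕ))) := by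
    ext j k
    rw [Matrix.of_apply, Matrix.of_apply, hwr]
  rw [hdetR]
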